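/- Fix n ≥ 1 and constants k_1,…,k_n > 0 with ∑_{i=1}^n k_i < 1. Define the principal's utility U on the domain D = {β ∈ (0,∞)^n : ∑_i β_i < 1} by U(β) = (1 − ∑_{i=1}^n β_i) · [∏_{i=1}^n (k_i β_i)^{k_i}]^{1/(1 − ∑_{j=1}^n k_j)}. Then the contract β* with β*_i = k_i for every i maximizes U over D; that is, U(β) ≤ U(β*) for all β ∈ D. -/
import Mathlib


/-- For the Cobb-Douglas production, the optimal contract is `β i = k i`:
it maximizes the principal's utility
`U(β) = (1 - ∑ i, β i) * (∏ i, (k i * β i) ^ (k i)) ^ (1 / (1 - ∑ j, k j))`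
over `D = {β ∈ (0,∞)ⁿ : ∑ i, β i < 1}`. -/
theorem stmt_9 (n : ℕ) (hn : 1 ≤ n) (k : Fin n → ℝ) (hk : ∀ i, 0 < k i)
    (hsum : ∑ i, k i < 1)
    (β : Fin n → ℝ) (hβ : ∀ i, 0 < β i) (hβsum : ∑ i, β i < 1) :
    (1 - ∑ i, β i) * (∏ i, (k i * β i) ^ (k i)) ^ (1 / (1 - ∑ j, k j)) ≤
      (1 - ∑ i, k i) * (∏ i, (k i * k i) ^ (k i)) ^ (1 / (1 - ∑ j, k j)) := by
  set s := ∑ i, k i with hs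
  set t := ∑ i, β i with ht
  have hs1 : (0:ℝ) < 1 - s := by linarith
  have ht1 : (0:ℝ) < 1 - t := by linarith
  set r := 1 / (1 - s) with hr
  have hrpos : 0 < r := by positivity
  -- weighted AM-GM
  have key : (((1 - t) / (1 - s)) ^ (1 - s)) * ∏ i, (β i / k i) ^ (k i) ≤ 1 := by
    have := Real.geom_mean_le_arith_mean_weighted (Finset.univ : Finset (Option (Fin n)))
      (fun o => o.elim (1 - s) k) (fun o => o.elim ((1 - t) / (1 - s)) (fun i => β i / k i))
      (by rintro (_|i) _
          · exact hs1.le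
          · exact (hk i).le)
      (by rw [Fintype.sum_option]; simp [← hs])
      (by rintro (_|i) _
          · exact (div_pos ht1 hs1).le
          · exact (div_pos (hβ i) (hk i)).le)
    rw [Fintype.prod_option, Fintype.sum_option] at this
    simp only [Option.elim] at this
    calc ((1 - t) / (1 - s)) ^ (1 - s) * ∏ i, (β i / k i) ^ (k i)
        ≤ (1 - s) * ((1 - t) / (1 - s)) + ∑ i, k i * (β i / k i) := this
      _ = 1 := by
          rw [mul_div_cancel₀ _ hs1.ne']
          have : ∀ i, k i * (β i / k i) = β i := fun i =>
            mul_div_cancel₀ _ (hk i).ne'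
          simp [this, ← ht]
  -- rewrite products
  have hprodk : (0:ℝ) < ∏ i, (k i) ^ (k i) := by
    apply Finset.prod_pos; intro i _
    exact Real.rpow_pos_of_pos (hk i) _
  have hprodβ : (0:ℝ) < ∏ i, (β i) ^ (k i) := by
    apply Finset.prod_pos; intro i _
    exact Real.rpow_pos_of_pos (hβ i) _
  have hsplit : ∀ (g : Fin n → ℝ), (∀ i, 0 < g i) →
      ∏ i, (k i * g i) ^ (k i) = (∏ i, (k i) ^ (k i)) * ∏ i, (g i) ^ (k i) := by
    intro g hg
    rw [← Finset.prod_mul_distrib]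
    apply Finset.prod_congr rfl
    intro i _
    exact Real.mul_rpow (hk i).le (hg i).le
  -- key₂ : (1-t)^(1-s) * ∏ β^k ≤ (1-s)^(1-s) * ∏ k^k
  have key₂ : ((1 - t) ^ (1 - s)) * ∏ i, (β i) ^ (k i) ≤
      ((1 - s) ^ (1 - s)) * ∏ i, (k i) ^ (k i) := by
    have h1 : ((1 - t) / (1 - s)) ^ (1 - s) = (1 - t) ^ (1 - s) / (1 - s) ^ (1 - s) :=
      Real.div_rpow ht1.le hs1.le _
    have h2 : ∏ i, (β i / k i) ^ (k i) = (∏ i, (β i) ^ (k i)) / ∏ i, (k i) ^ (k i) := by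
      rw [← Finset.prod_div_distrib]
      apply Finset.prod_congr rfl
      intro i _
      exact Real.div_rpow (hβ i).le (hk i).le _
    rw [h1, h2, div_mul_div_comm, div_le_one (by positivity)] at key
    linarith [key]
  -- raise to power r
  have key₃ : (1 - t) * (∏ i, (β i) ^ (k i)) ^ r ≤
      (1 - s) * (∏ i, (k i) ^ (k i)) ^ r := by
    have := Real.rpow_le_rpow (by positivity) key₂ hrpos.le
    have e : (1 - s) * r = 1 := by
      rw [hr]; field_simp
    rw [Real.mul_rpow (by positivity) hprodβ.le,
        Real.mul_rpow (by positivity) hprodk.le,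
        ← Real.rpow_mul ht1.le, ← Real.rpow_mul hs1.le, e,
        Real.rpow_one, Real.rpow_one] at this
    exact this
  -- conclude
  rw [hsplit β hβ, hsplit k hk,
      Real.mul_rpow hprodk.le hprodβ.le, Real.mul_rpow hprodk.le hprodk.le]
  have hpk : 0 < (∏ i, (k i) ^ (k i)) ^ r := Real.rpow_pos_of_pos hprodk _
  calc (1 - t) * ((∏ i, (k i) ^ (k i)) ^ r * (∏ i, (β i) ^ (k i)) ^ r)
      = (∏ i, (k i) ^ (k i)) ^ r * ((1 - t) * (∏ i, (β i) ^ (k i)) ^ r) := by ring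
    _ ≤ (∏ i, (k i) ^ (k i)) ^ r * ((1 - s) * (∏ i, (k i) ^ (k i)) ^ r) :=
        mul_le_mul_of_nonneg_left key₃ hpk.le
    _ = (1 - s) * ((∏ i, (k i) ^ (k i)) ^ r * (∏ i, (k i) ^ (k i)) ^ r) := by ring
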